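/- Let X be a type and F : X × X → ℂ. Assume that for every k ≥ 1 and every tuple (z_1, …, z_k) ∈ X^k one has Σ_{σ} sgn(σ) · Π_{i=1}^k F(z_i, z_{σ(i)}) = Σ_{p} Π_{{i,j} ∈ p} ( −F(z_i, z_j)·F(z_j, z_i) ), where the left sum is over all permutations σ of {1,…,k} with no fixed point, and the right sum is over all perfect matchings p of {1,…,k} (so the right-hand side is 0 when k is odd). Then for every n ≥ 1 and every tuple (z_1, …, z_n) ∈ X^n, Σ_{σ} sgn(σ) · Π_{i=1}^n F(z_i, z_{σ(i)}) = 0, where the sum is over all permutations σ of {1,…,n} having no fixed point and no 2-cycle (i.e. all cycles of σ have length at least 3). -/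

import Mathlib

open Equiv Finset

/- aux -/
private lemma invol_apply_apply {α : Type*} {p : Equiv.Perm α} (hp : p * p = 1) (i : α) :
    p (p i) = i := by
  have := Equiv.ext_iff.mp hp i
  simpa using this

private lemma prod_pairs {n : ℕ} {M : Type*} [CommMonoid M]
    {p : Equiv.Perm (Fin n)} (hp : p * p = 1) (f : Fin n → M) :
    (∏ i ∈ univ.filter (fun i => p i ≠ i), f i)
      = ∏ i ∈ univ.filter (fun i => i < p i), (f i * f (p i)) := by
  have hsplit : univ.filter (fun i => p i ≠ i)
      = univ.filter (fun i : Fin n => i < p i) ∪ univ.filter (fun i => p i < i) := by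
    ext i
    simp only [mem_filter, mem_union, mem_univ, true_and]
    constructor
    · intro h
      exact lt_or_gt_of_ne h.symm
    · rintro (h | h)
      · exact h.ne'
      · exact h.ne
  have hdisj : Disjoint (univ.filter (fun i : Fin n => i < p i)) (univ.filter (fun i => p i < i)) := by
    rw [Finset.disjoint_left]
    intro i h1 h2
    simp only [mem_filter] at h1 h2
    exact absurd h2.2 (not_lt_of_gt h1.2)
  rw [hsplit, Finset.prod_union hdisj, Finset.prod_mul_distrib]
  congr 1
  refine Finset.prod_nbij' (fun i => p i) (fun i => p i) ?_ ?_ ?_ ?_ ?_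
  · intro a ha
    simp only [mem_filter, mem_univ, true_and] at ha ⊢
    rw [invol_apply_apply hp]; exact ha
  · intro a ha
    simp only [mem_filter, mem_univ, true_and] at ha ⊢
    rw [invol_apply_apply hp]; exact ha
  · intro a _; exact invol_apply_apply hp a
  · intro a _; exact invol_apply_apply hp a
  · intro a _; rw [invol_apply_apply hp]

private lemma sign_involution {n : ℕ}
    {p : Equiv.Perm (Fin n)} (hp : p * p = 1) :
    (Equiv.Perm.sign p : ℤ) = (-1) ^ (univ.filter (fun i : Fin n => i < p i)).card := by
  suffices H : ∀ (k : ℕ) (p : Perm (Fin n)), p * p = 1 →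
      (univ.filter (fun i : Fin n => i < p i)).card = k → (Perm.sign p : ℤ) = (-1) ^ k from
    H _ p hp rfl
  intro k
  induction k with
  | zero =>
    intro p hp hk
    have hfe : univ.filter (fun i : Fin n => i < p i) = ∅ := card_eq_zero.mp hk
    have hp1 : p = 1 := by
      apply Equiv.ext
      intro i
      rw [Perm.one_apply]
      by_contra h
      rcases lt_or_gt_of_ne (show p i ≠ i from h) with h1 | h2
      · have : p i ∈ univ.filter (fun j : Fin n => j < p j) := by
          simp only [mem_filter, mem_univ, true_and]
          rw [invol_apply_apply hp]; exact h1
        rw [hfe] at this; exact absurd this (notMem_empty _)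
      · have : i ∈ univ.filter (fun j : Fin n => j < p j) := by
          simp only [mem_filter, mem_univ, true_and]; exact h2
        rw [hfe] at this; exact absurd this (notMem_empty _)
    simp [hp1]
  | succ k ih =>
    intro p hp hk
    have hne : (univ.filter (fun i : Fin n => i < p i)).Nonempty := by
      rw [← card_pos, hk]; omega
    obtain ⟨a, ha⟩ := hne
    have halt : a < p a := (mem_filter.mp ha).2
    have hane : a ≠ p a := ne_of_lt halt
    set q : Perm (Fin n) := p * Equiv.swap a (p a) with hq
    have happ : ∀ i, q i = if i = a then a else if i = p a then p a else p i := by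
      intro i
      by_cases h1 : i = a
      · simp [hq, h1, Equiv.swap_apply_left, invol_apply_apply hp]
      · by_cases h2 : i = p a
        · simp [hq, h1, h2, Equiv.swap_apply_right, Ne.symm hane]
        · simp [hq, h1, h2, Equiv.swap_apply_of_ne_of_ne h1 h2]
    have hq2 : q * q = 1 := by
      ext i
      simp only [Perm.mul_apply, Perm.one_apply]
      rw [happ i]
      by_cases h1 : i = a
      · simp [h1, happ a, hane.symm]
      · by_cases h2 : i = p a
        · subst h2
          rw [if_neg h1, if_pos rfl, happ (p a), if_neg h1, if_pos rfl]
        · rw [if_neg h1, if_neg h2, happ (p i)]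
          have hpa : p i ≠ a := fun h => h2 (by rw [← h, invol_apply_apply hp])
          have hpb : p i ≠ p a := fun h => h1 (p.injective h)
          rw [if_neg hpa, if_neg hpb, invol_apply_apply hp]
    have hfq : univ.filter (fun i : Fin n => i < q i) = (univ.filter (fun i : Fin n => i < p i)).erase a := by
      ext i
      simp only [mem_filter, mem_univ, true_and, mem_erase]
      rw [happ i]
      by_cases h1 : i = a
      · simp [h1]
      · by_cases h2 : i = p a
        · rw [if_neg h1, if_pos h2, h2]
          simp only [lt_self_iff_false, false_iff, not_and]
          intro _
          rw [invol_apply_apply hp]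
          exact not_lt_of_gt halt
        · rw [if_neg h1, if_neg h2]
          simp [h1]
    have hcard : (univ.filter (fun i : Fin n => i < q i)).card = k := by
      rw [hfq, card_erase_of_mem ha, hk]
      omega
    have hsq := ih q hq2 hcard
    have hsgn : (Perm.sign q : ℤ) = (Perm.sign p : ℤ) * (Perm.sign (Equiv.swap a (p a)) : ℤ) := by
      rw [hq, map_mul]; push_cast; ring
    rw [Perm.sign_swap hane] at hsgn
    have : (Perm.sign p : ℤ) = -(Perm.sign q : ℤ) := by
      rw [hsgn]; push_cast; ring
    rw [this, hsq, pow_succ]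
    ring

private lemma Finset.prod_neg' {α : Type*} (s : Finset α) (f : α → ℂ) :
    ∏ i ∈ s, (-f i) = (-1) ^ s.card * ∏ i ∈ s, f i := by
  calc ∏ i ∈ s, (-f i) = ∏ i ∈ s, ((-1) * f i) := by simp
  _ = (∏ _i ∈ s, (-1 : ℂ)) * ∏ i ∈ s, f i := Finset.prod_mul_distrib
  _ = (-1) ^ s.card * ∏ i ∈ s, f i := by rw [Finset.prod_const]

private def involPart {α : Type*} [DecidableEq α] (σ : Equiv.Perm α) : Equiv.Perm α :=
  Function.Involutive.toPerm (fun i => if σ (σ i) = i then σ i else i) (by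
    intro i
    dsimp only
    by_cases h : σ (σ i) = i
    · rw [if_pos h, if_pos (congrArg σ h)]
      exact h
    · simp [h])

private lemma involPart_apply {α : Type*} [DecidableEq α] (σ : Equiv.Perm α) (i : α) :
    involPart σ i = if σ (σ i) = i then σ i else i := rfl

private lemma involPart_mul_self {α : Type*} [DecidableEq α] (σ : Equiv.Perm α) :
    involPart σ * involPart σ = 1 := by
  ext i
  simp only [Perm.mul_apply, Perm.one_apply]
  exact (Function.Involutive.toPerm_involutive _) i

private lemma involPart_ne_iff {α : Type*} [DecidableEq α] {σ : Equiv.Perm α}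
    (hσ : ∀ i, σ i ≠ i) (i : α) : involPart σ i ≠ i ↔ σ (σ i) = i := by
  rw [involPart_apply]
  by_cases h : σ (σ i) = i
  · simp [h, hσ i]
  · simp [h]

private lemma mulPart_apply {α : Type*} [DecidableEq α] (σ : Equiv.Perm α) (i : α) :
    (involPart σ * σ) i = if σ (σ i) = i then i else σ i := by
  simp only [Perm.mul_apply, involPart_apply]
  by_cases h : σ (σ i) = i
  · rw [if_pos (congrArg σ h), if_pos h, h]
  · have h2 : ¬ σ (σ (σ i)) = σ i := fun hc => h (σ.injective hc)
    rw [if_neg h2, if_neg h]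

private lemma mulPart_eq_iff {α : Type*} [DecidableEq α] {σ : Equiv.Perm α}
    (hσ : ∀ i, σ i ≠ i) (i : α) : (involPart σ * σ) i = i ↔ σ (σ i) = i := by
  rw [mulPart_apply]
  by_cases h : σ (σ i) = i
  · simp [h]
  · simp [h, hσ i]

private noncomputable def MM {X : Type*} (F : X × X → ℂ) {n : ℕ} (z : Fin n → X)
    (S : Finset (Fin n)) : ℂ :=
  ∑ p ∈ univ.filter (fun p : Perm (Fin n) => p * p = 1 ∧ ∀ i, p i ≠ i ↔ i ∈ S),
    ∏ i ∈ univ.filter (fun i => i < p i), (-(F (z i, z (p i)) * F (z (p i), z i)))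

private noncomputable def LL {X : Type*} (F : X × X → ℂ) {n : ℕ} (z : Fin n → X)
    (T : Finset (Fin n)) : ℂ :=
  ∑ τ ∈ univ.filter (fun τ : Perm (Fin n) =>
      (∀ i, τ i ≠ i ↔ i ∈ T) ∧ ∀ i, τ i ≠ i → τ (τ i) ≠ i),
    ((Perm.sign τ : ℤ) : ℂ) * ∏ i ∈ univ.filter (fun i => τ i ≠ i), F (z i, z (τ i))

private lemma decomposition {X : Type*} (F : X × X → ℂ) {n : ℕ} (z : Fin n → X) :
    (∑ σ ∈ univ.filter (fun σ : Perm (Fin n) => ∀ i, σ i ≠ i),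
        ((Perm.sign σ : ℤ) : ℂ) * ∏ i, F (z i, z (σ i)))
      = ∑ S : Finset (Fin n), MM F z S * LL F z Sᶜ := by
  classical
  set g : Perm (Fin n) → ℂ := fun p =>
    ((Perm.sign p : ℤ) : ℂ) * ∏ i ∈ univ.filter (fun i => p i ≠ i), F (z i, z (p i)) with hg
  set D : Finset (Perm (Fin n) × Perm (Fin n)) :=
    (univ ×ˢ univ).filter (fun x => x.1 * x.1 = 1 ∧ (∀ i, x.2 i ≠ i → x.2 (x.2 i) ≠ i) ∧
      (∀ i, x.1 i ≠ i ↔ x.2 i = i)) with hD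
  have step1 : (∑ σ ∈ univ.filter (fun σ : Perm (Fin n) => ∀ i, σ i ≠ i),
      ((Perm.sign σ : ℤ) : ℂ) * ∏ i, F (z i, z (σ i)))
      = ∑ x ∈ D, g x.1 * g x.2 := by
    refine Finset.sum_nbij' (fun σ => (involPart σ, involPart σ * σ)) (fun x => x.1 * x.2)
      ?_ ?_ ?_ ?_ ?_
    · intro σ hσ'
      have hσ : ∀ i, σ i ≠ i := (mem_filter.mp hσ').2
      simp only [hD, mem_filter, mem_product, mem_univ, true_and]
      refine ⟨involPart_mul_self σ, ?_, ?_⟩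
      · intro i hi hcon
        rw [Ne, mulPart_eq_iff hσ] at hi
        have h1 : (involPart σ * σ) i = σ i := by rw [mulPart_apply, if_neg hi]
        rw [h1, mulPart_apply] at hcon
        by_cases h2 : σ (σ (σ i)) = σ i
        · rw [if_pos h2] at hcon; exact hσ i hcon
        · rw [if_neg h2] at hcon; exact hi hcon
      · intro i
        rw [involPart_ne_iff hσ]
        exact (mulPart_eq_iff hσ i).symm
    · rintro ⟨p, τ⟩ hx
      simp only [hD, mem_filter, mem_product, mem_univ, true_and] at hx
      obtain ⟨hp, hlong, hiff⟩ := hx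
      simp only [mem_filter, mem_univ, true_and]
      intro i
      by_cases ht : τ i = i
      · have := (hiff i).mpr ht
        rw [Perm.mul_apply, ht]; exact this
      · have hfix : p (τ i) = τ i := by
          by_contra hmov
          exact ht (τ.injective ((hiff (τ i)).mp hmov))
        rw [Perm.mul_apply, hfix]; exact ht
    · intro σ _
      simp only
      rw [← mul_assoc, involPart_mul_self, one_mul]
    · rintro ⟨p, τ⟩ hx
      simp only [hD, mem_filter, mem_product, mem_univ, true_and] at hx
      obtain ⟨hp, hlong, hiff⟩ := hx
      have hfix : ∀ j, τ j ≠ j → p (τ j) = τ j := by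
        intro j hj
        by_contra hmov
        exact hj (τ.injective ((hiff (τ j)).mp hmov))
      have hkey : involPart (p * τ) = p := by
        ext i
        rw [involPart_apply]
        by_cases ht : τ i = i
        · have hpi : p i ≠ i := (hiff i).mpr ht
          have h1 : (p * τ) i = p i := by rw [Perm.mul_apply, ht]
          have hppi : p (p i) = i := invol_apply_apply hp i
          have h2 : (p * τ) (p i) = i := by
            have hmov : p (p i) ≠ p i := by rw [hppi]; exact Ne.symm hpi
            have hτfix : τ (p i) = p i := (hiff (p i)).mp hmov
            rw [Perm.mul_apply, hτfix, hppi]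
          rw [h1, h2, if_pos rfl]
        · have hpi : p i = i := by
            by_contra hne; exact ht ((hiff i).mp hne)
          have h1 : (p * τ) i = τ i := by rw [Perm.mul_apply, hfix i ht]
          have h2 : (p * τ) (τ i) = τ (τ i) := by
            have ht2 : τ (τ i) ≠ τ i := fun hc => ht (τ.injective hc)
            rw [Perm.mul_apply, hfix (τ i) ht2]
          have h3 : τ (τ i) ≠ i := hlong i ht
          rw [h1, h2, if_neg h3, hpi]
      dsimp only
      rw [hkey, ← mul_assoc, hp, one_mul]
    · intro σ hσ'
      have hσ : ∀ i, σ i ≠ i := (mem_filter.mp hσ').2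
      simp only [hg]
      have hmul : involPart σ * (involPart σ * σ) = σ := by
        rw [← mul_assoc, involPart_mul_self, one_mul]
      have hsgn : ((Perm.sign σ : ℤ) : ℂ)
          = ((Perm.sign (involPart σ) : ℤ) : ℂ) * ((Perm.sign (involPart σ * σ) : ℤ) : ℂ) := by
        conv_lhs => rw [← hmul]
        rw [map_mul]
        push_cast
        ring
      have hprod : (∏ i, F (z i, z (σ i)))
          = (∏ i ∈ univ.filter (fun i => involPart σ i ≠ i), F (z i, z (involPart σ i)))
            * ∏ i ∈ univ.filter (fun i => (involPart σ * σ) i ≠ i),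
                F (z i, z ((involPart σ * σ) i)) := by
        rw [← prod_filter_mul_prod_filter_not univ (fun i => involPart σ i ≠ i)
          (fun i => F (z i, z (σ i)))]
        congr 1
        · apply Finset.prod_congr rfl
          intro i hi
          have h1 : σ (σ i) = i := (involPart_ne_iff hσ i).mp (mem_filter.mp hi).2
          rw [involPart_apply, if_pos h1]
        · have hset : univ.filter (fun i => ¬ involPart σ i ≠ i)
              = univ.filter (fun i => (involPart σ * σ) i ≠ i) := by
            ext i
            simp only [mem_filter, mem_univ, true_and]
            rw [not_not]
            constructor
            · intro h
              rw [Ne, mulPart_eq_iff hσ]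
              intro hc
              exact ((involPart_ne_iff hσ i).mpr hc) h
            · intro h
              by_contra hne
              have hσσ := (involPart_ne_iff hσ i).mp hne
              exact h ((mulPart_eq_iff hσ i).mpr hσσ)
          rw [hset]
          apply Finset.prod_congr rfl
          intro i hi
          have h1 : ¬ σ (σ i) = i := by
            have := (mem_filter.mp hi).2
            rw [Ne, mulPart_eq_iff hσ] at this
            exact this
          rw [mulPart_apply, if_neg h1]
      rw [hsgn, hprod]
      ring
  rw [step1]
  rw [← Finset.sum_fiberwise_of_maps_to (t := (univ : Finset (Finset (Fin n))))
    (g := fun x : Perm (Fin n) × Perm (Fin n) => univ.filter (fun i => x.1 i ≠ i))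
    (fun x _ => mem_univ _) (fun x => g x.1 * g x.2)]
  apply Finset.sum_congr rfl
  intro S _
  have step3 : D.filter (fun x => univ.filter (fun i => x.1 i ≠ i) = S)
      = (univ.filter (fun p : Perm (Fin n) => p * p = 1 ∧ ∀ i, p i ≠ i ↔ i ∈ S)) ×ˢ
        (univ.filter (fun τ : Perm (Fin n) =>
          (∀ i, τ i ≠ i ↔ i ∈ Sᶜ) ∧ ∀ i, τ i ≠ i → τ (τ i) ≠ i)) := by
    rw [← Finset.filter_product, hD, Finset.filter_filter]
    apply Finset.filter_congr
    rintro ⟨p, τ⟩ _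
    simp only
    constructor
    · rintro ⟨⟨hp, hlong, hiff⟩, hkey⟩
      have hmem : ∀ i, p i ≠ i ↔ i ∈ S := by
        intro i
        rw [← hkey]
        simp
      refine ⟨⟨hp, hmem⟩, ⟨fun i => ?_, hlong⟩⟩
      rw [Finset.mem_compl, ← hmem i]
      constructor
      · intro ht hp'
        exact ht ((hiff i).mp hp')
      · intro hp' ht
        exact hp' ((hiff i).mpr ht)
    · rintro ⟨⟨hp, hmem⟩, hcomp, hlong⟩
      refine ⟨⟨hp, hlong, fun i => ?_⟩, ?_⟩
      · rw [hmem i]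
        have hc := hcomp i
        rw [Finset.mem_compl] at hc
        constructor
        · intro hS
          by_contra ht
          exact (hc.mp ht) hS
        · intro ht
          by_contra hS
          exact (hc.mpr hS) ht
      · ext i
        simp [hmem i]
  rw [step3, Finset.sum_product]
  have : ∀ p ∈ univ.filter (fun p : Perm (Fin n) => p * p = 1 ∧ ∀ i, p i ≠ i ↔ i ∈ S),
      (∑ τ ∈ univ.filter (fun τ : Perm (Fin n) =>
          (∀ i, τ i ≠ i ↔ i ∈ Sᶜ) ∧ ∀ i, τ i ≠ i → τ (τ i) ≠ i), g p * g τ)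
      = g p * LL F z Sᶜ := by
    intro p _
    rw [← Finset.mul_sum]
    rfl
  rw [Finset.sum_congr rfl this, ← Finset.sum_mul]
  congr 1
  apply Finset.sum_congr rfl
  intro p hp'
  obtain ⟨hp, -⟩ := (mem_filter.mp hp').2
  simp only [hg]
  rw [prod_pairs hp (fun i => F (z i, z (p i)))]
  have hz : ∀ i ∈ univ.filter (fun i : Fin n => i < p i),
      F (z i, z (p i)) * F (z (p i), z (p (p i))) = F (z i, z (p i)) * F (z (p i), z i) := by
    intro i _
    rw [invol_apply_apply hp]
  rw [Finset.prod_congr rfl hz, Finset.prod_neg']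
  have hs := sign_involution hp
  rw [show ((Perm.sign p : ℤ) : ℂ) = (((-1) ^ (univ.filter (fun i : Fin n => i < p i)).card : ℤ) : ℂ) by rw [hs]]
  push_cast
  ring

private lemma MM_empty {X : Type*} (F : X × X → ℂ) {n : ℕ} (z : Fin n → X) :
    MM F z (∅ : Finset (Fin n)) = 1 := by
  classical
  have hfilt : univ.filter (fun p : Perm (Fin n) =>
      p * p = 1 ∧ ∀ i, p i ≠ i ↔ i ∈ (∅ : Finset (Fin n))) = {1} := by
    ext p
    simp only [mem_filter, mem_univ, true_and, mem_singleton, Finset.notMem_empty, iff_false,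
      not_not]
    constructor
    · rintro ⟨-, hfix⟩
      apply Equiv.ext
      intro i
      rw [Perm.one_apply]
      exact hfix i
    · rintro rfl
      exact ⟨one_mul 1, fun i => Perm.one_apply i⟩
  unfold MM
  rw [hfilt, Finset.sum_singleton]
  have h2 : univ.filter (fun i : Fin n => i < (1 : Perm (Fin n)) i) = ∅ := by
    ext i; simp
  rw [h2, Finset.prod_empty]

private lemma LL_empty {X : Type*} (F : X × X → ℂ) {n : ℕ} (z : Fin n → X) :
    LL F z (∅ : Finset (Fin n)) = 1 := by
  classical
  have hfilt : univ.filter (fun τ : Perm (Fin n) =>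
      (∀ i, τ i ≠ i ↔ i ∈ (∅ : Finset (Fin n))) ∧ ∀ i, τ i ≠ i → τ (τ i) ≠ i) = {1} := by
    ext τ
    simp only [mem_filter, mem_univ, true_and, mem_singleton, Finset.notMem_empty, iff_false,
      not_not]
    constructor
    · rintro ⟨hfix, -⟩
      apply Equiv.ext
      intro i
      rw [Perm.one_apply]
      exact hfix i
    · rintro rfl
      exact ⟨fun i => Perm.one_apply i, fun i hi => absurd (Perm.one_apply i) hi⟩
  unfold LL
  rw [hfilt, Finset.sum_singleton]
  have h2 : univ.filter (fun i : Fin n => (1 : Perm (Fin n)) i ≠ i) = ∅ := by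
    ext i; simp
  rw [h2, Finset.prod_empty]
  simp

private lemma LL_transfer {X : Type*} (F : X × X → ℂ) {n : ℕ} (z : Fin n → X)
    (T : Finset (Fin n)) :
    LL F z T = ∑ σ ∈ univ.filter
        (fun σ : Perm (Fin T.card) => ∀ j, σ j ≠ j ∧ σ (σ j) ≠ j),
      ((Perm.sign σ : ℤ) : ℂ)
        * ∏ j, F (z ↑(T.orderIsoOfFin rfl j), z ↑(T.orderIsoOfFin rfl (σ j))) := by
  classical
  set e : Fin T.card ≃ {x : Fin n // x ∈ T} := (T.orderIsoOfFin rfl).toEquiv with he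
  have key : ∀ σ : Perm (Fin T.card), (∀ j, σ j ≠ j) →
      ∀ i : Fin n, σ.extendDomain e i ≠ i ↔ i ∈ T := by
    intro σ hσ i
    constructor
    · intro hne
      by_contra hiT
      exact hne (Perm.extendDomain_apply_not_subtype σ e hiT)
    · intro hiT
      rw [Perm.extendDomain_apply_subtype σ e hiT]
      intro hc
      have : σ (e.symm ⟨i, hiT⟩) = e.symm ⟨i, hiT⟩ := by
        apply e.injective
        apply Subtype.ext
        rw [hc, Equiv.apply_symm_apply]
      exact hσ _ this
  unfold LL
  symm
  refine Finset.sum_bij (fun σ _ => σ.extendDomain e) ?_ ?_ ?_ ?_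
  · intro σ hσ'
    have hσ : ∀ j, σ j ≠ j ∧ σ (σ j) ≠ j := (mem_filter.mp hσ').2
    simp only [mem_filter, mem_univ, true_and]
    refine ⟨key σ (fun j => (hσ j).1) , ?_⟩
    intro i hne
    have hiT : i ∈ T := (key σ (fun j => (hσ j).1) i).mp hne
    rw [Perm.extendDomain_apply_subtype σ e hiT]
    have hmem2 : ((e (σ (e.symm ⟨i, hiT⟩)) : {x : Fin n // x ∈ T}) : Fin n) ∈ T :=
      (e (σ (e.symm ⟨i, hiT⟩))).2
    rw [Perm.extendDomain_apply_subtype σ e hmem2]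
    intro hc
    have hs : (e.symm (⟨_, hmem2⟩ : {x : Fin n // x ∈ T})) = σ (e.symm ⟨i, hiT⟩) := by
      apply e.injective
      rw [Equiv.apply_symm_apply]
    rw [hs] at hc
    have : σ (σ (e.symm ⟨i, hiT⟩)) = e.symm ⟨i, hiT⟩ := by
      apply e.injective
      apply Subtype.ext
      rw [hc, Equiv.apply_symm_apply]
    exact (hσ _).2 this
  · intro σ1 h1 σ2 h2 heq
    apply Equiv.ext
    intro j
    have hj := congrArg (fun τ : Perm (Fin n) => τ ((e j : Fin n))) heq
    rw [Perm.extendDomain_apply_image σ1 e j, Perm.extendDomain_apply_image σ2 e j] at hj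
    exact e.injective (Subtype.ext hj)
  · intro τ hτ'
    obtain ⟨hiff, hlong⟩ := (mem_filter.mp hτ').2
    have hmemiff : ∀ x : Fin n, x ∈ T ↔ τ x ∈ T := by
      intro x
      by_cases hx : τ x = x
      · rw [hx]
      · have hxT : x ∈ T := (hiff x).mp hx
        simp only [hxT, true_iff]
        rw [← hiff (τ x)]
        intro hc
        exact hx (τ.injective hc)
    set sp : Perm {x : Fin n // x ∈ T} := τ.subtypePerm (fun x => (hmemiff x).symm) with hsp
    set σ : Perm (Fin T.card) := e.symm.permCongr sp with hσdef
    have hσapp : ∀ j, σ j = e.symm (sp (e j)) := by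
      intro j
      rfl
    have hspapp : ∀ x : {x : Fin n // x ∈ T}, ((sp x : {x : Fin n // x ∈ T}) : Fin n) = τ x := by
      intro x
      rw [hsp]
      rfl
    have hσmem : ∀ j, σ j ≠ j ∧ σ (σ j) ≠ j := by
      intro j
      constructor
      · intro hc
        rw [hσapp j] at hc
        have : ((sp (e j) : {x : Fin n // x ∈ T}) : Fin n) = ((e j : {x : Fin n // x ∈ T}) : Fin n) := by
          have := congrArg e hc
          rw [Equiv.apply_symm_apply] at this
          rw [this]
        rw [hspapp] at this
        exact ((hiff _).mpr (e j).2) this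
      · intro hc
        rw [hσapp, hσapp, Equiv.apply_symm_apply] at hc
        have : ((sp (sp (e j)) : {x : Fin n // x ∈ T}) : Fin n) = ((e j : {x : Fin n // x ∈ T}) : Fin n) := by
          have := congrArg e hc
          rw [Equiv.apply_symm_apply] at this
          rw [this]
        rw [hspapp, hspapp] at this
        have hmoved : τ ((e j : {x : Fin n // x ∈ T}) : Fin n) ≠ ((e j : {x : Fin n // x ∈ T}) : Fin n) :=
          (hiff _).mpr (e j).2
        exact hlong _ hmoved this
    refine ⟨σ, ?_, ?_⟩
    · simp only [mem_filter, mem_univ, true_and]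
      exact hσmem
    · apply Equiv.ext
      intro x
      by_cases hx : x ∈ T
      · rw [Perm.extendDomain_apply_subtype σ e hx, hσapp, Equiv.apply_symm_apply, hspapp,
          Equiv.apply_symm_apply]
      · rw [Perm.extendDomain_apply_not_subtype σ e hx]
        by_contra hc
        exact hx ((hiff x).mp (Ne.symm hc))
  · intro σ hσ'
    have hσ : ∀ j, σ j ≠ j ∧ σ (σ j) ≠ j := (mem_filter.mp hσ').2
    have hfilt : univ.filter (fun i : Fin n => σ.extendDomain e i ≠ i) = T := by
      ext i
      simp only [mem_filter, mem_univ, true_and]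
      exact key σ (fun j => (hσ j).1) i
    congr 1
    · rw [Perm.sign_extendDomain]
    · rw [hfilt, ← Finset.prod_coe_sort T
        (fun i => F (z i, z (σ.extendDomain e i)))]
      rw [← Equiv.prod_comp e
        (fun x : {x : Fin n // x ∈ T} => F (z ↑x, z (σ.extendDomain e ↑x)))]
      apply Fintype.prod_congr
      intro j
      rw [Perm.extendDomain_apply_image σ e j]
      rfl


/-- Abstract vanishing lemma: if for every `k ≥ 1` and every tuple
`z : Fin k → X` the sum over fixed-point-free permutations of the signed products of a
two-point function `F` equals the sum over perfect matchings (encoded as fixed-point-free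
involutions `p`, a matching pair `{i, j}` being `{i, p i}` with representative `i < p i`)
of `∏_{{i,j} ∈ p} (−F(z_i,z_j) F(z_j,z_i))`, then for every `n ≥ 1` and every tuple
`z : Fin n → X` the sum over permutations with no fixed point and no 2-cycle (all cycles of
length at least 3) of the signed products vanishes. -/
theorem vanishing_of_long_cycle_sum
    {X : Type*} (F : X × X → ℂ)
    (hWick : ∀ k : ℕ, 1 ≤ k → ∀ z : Fin k → X,
      (∑ σ ∈ univ.filter (fun σ : Perm (Fin k) => ∀ i, σ i ≠ i),
        ((Perm.sign σ : ℤ) : ℂ) * ∏ i, F (z i, z (σ i)))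
      = ∑ p ∈ univ.filter (fun p : Perm (Fin k) => (∀ i, p i ≠ i) ∧ p * p = 1),
          ∏ i ∈ univ.filter (fun i => i < p i),
            (-(F (z i, z (p i)) * F (z (p i), z i)))) :
    ∀ n : ℕ, 1 ≤ n → ∀ z : Fin n → X,
      ∑ σ ∈ univ.filter (fun σ : Perm (Fin n) => ∀ i, σ i ≠ i ∧ σ (σ i) ≠ i),
        ((Perm.sign σ : ℤ) : ℂ) * ∏ i, F (z i, z (σ i)) = 0 := by
  intro n
  induction n using Nat.strong_induction_on with
  | _ n IH =>
    intro hn z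
    have hLLuniv : LL F z (univ : Finset (Fin n))
        = ∑ σ ∈ univ.filter (fun σ : Perm (Fin n) => ∀ i, σ i ≠ i ∧ σ (σ i) ≠ i),
            ((Perm.sign σ : ℤ) : ℂ) * ∏ i, F (z i, z (σ i)) := by
      unfold LL
      apply Finset.sum_congr
      · ext τ
        simp only [mem_filter, mem_univ, true_and]
        constructor
        · rintro ⟨h1, h2⟩ i
          exact ⟨(h1 i).mpr trivial, h2 i ((h1 i).mpr trivial)⟩
        · intro h
          exact ⟨fun i => ⟨fun _ => trivial, fun _ => (h i).1⟩, fun i _ => (h i).2⟩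
      · intro τ hτ
        have hfpf : ∀ i, τ i ≠ i := by
          have := (mem_filter.mp hτ).2
          exact fun i => (this i).1
        have hful : univ.filter (fun i : Fin n => τ i ≠ i) = univ := by
          apply Finset.filter_true_of_mem
          exact fun i _ => hfpf i
        rw [hful]
    have hA : (∑ σ ∈ univ.filter (fun σ : Perm (Fin n) => ∀ i, σ i ≠ i),
        ((Perm.sign σ : ℤ) : ℂ) * ∏ i, F (z i, z (σ i))) = MM F z univ := by
      rw [hWick n hn z]
      unfold MM
      apply Finset.sum_congr
      · ext p
        simp only [mem_filter, mem_univ, true_and]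
        constructor
        · rintro ⟨h1, h2⟩
          exact ⟨h2, fun i => ⟨fun _ => trivial, fun _ => h1 i⟩⟩
        · rintro ⟨h1, h2⟩
          exact ⟨fun i => (h2 i).mpr trivial, h1⟩
      · intro p _
        rfl
    have hLLzero : ∀ T : Finset (Fin n), T ≠ ∅ → T ≠ univ → LL F z T = 0 := by
      intro T hT1 hT2
      rw [LL_transfer]
      refine IH T.card ?_ ?_ (fun j => z ↑(T.orderIsoOfFin rfl j))
      · have hss : T ⊂ univ := Finset.ssubset_univ_iff.mpr hT2
        have := Finset.card_lt_card hss
        simpa using this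
      · have hne : T.Nonempty := Finset.nonempty_iff_ne_empty.mpr hT1
        exact Finset.card_pos.mpr hne
    have hne0 : (∅ : Finset (Fin n)) ≠ (univ : Finset (Fin n)) := by
      have huniv : (univ : Finset (Fin n)).Nonempty := ⟨⟨0, by omega⟩, mem_univ _⟩
      intro h
      rw [← h] at huniv
      exact Finset.not_nonempty_empty huniv
    have hmemempty : (∅ : Finset (Fin n)) ∈ (univ : Finset (Finset (Fin n))).erase univ :=
      Finset.mem_erase.mpr ⟨hne0, mem_univ _⟩
    have hdec := decomposition F z
    rw [hA] at hdec
    rw [← Finset.add_sum_erase _ (fun S => MM F z S * LL F z Sᶜ)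
      (mem_univ (univ : Finset (Fin n)))] at hdec
    rw [← Finset.add_sum_erase _ (fun S => MM F z S * LL F z Sᶜ) hmemempty] at hdec
    have hrest : (∑ S ∈ ((univ : Finset (Finset (Fin n))).erase univ).erase ∅,
        MM F z S * LL F z Sᶜ) = 0 := by
      apply Finset.sum_eq_zero
      intro S hS
      have hS1 : S ≠ ∅ := (Finset.mem_erase.mp hS).1
      have hS2 : S ≠ univ := (Finset.mem_erase.mp (Finset.mem_erase.mp hS).2).1
      have hc1 : Sᶜ ≠ ∅ := by
        intro h
        exact hS2 (by simpa using congrArg compl h)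
      have hc2 : Sᶜ ≠ univ := by
        intro h
        exact hS1 (by simpa using congrArg compl h)
      rw [hLLzero Sᶜ hc1 hc2, mul_zero]
    rw [hrest, add_zero, Finset.compl_univ, LL_empty, mul_one, Finset.compl_empty,
      MM_empty, one_mul] at hdec
    rw [← hLLuniv]
    exact (left_eq_add.mp hdec)
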